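/- Let I ≥ 2 and let m be an integer with F_I < m ≤ F_{I+1}. Then for every integer n ≥ 1 there exists an integer j with 1 ≤ j ≤ F_{I+1} such that the pair (m, n+j) is balanced. -/

import Mathlib

/-- `γ = (3 − √5)/2`. -/
noncomputable def gam : ℝ := (3 - Real.sqrt 5) / 2

/-- The Fibonacci word sequence `a_i = ⌊(i+1)γ⌋ − ⌊iγ⌋`. -/
noncomputable def fibSeq (i : ℕ) : ℤ :=
  ⌊((i : ℝ) + 1) * gam⌋ - ⌊(i : ℝ) * gam⌋

/-- `T(i,m,n) = ∑_{k<m} ∑_{ℓ<n} a_{i+k+ℓ}`. -/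
noncomputable def fibT (i m n : ℕ) : ℤ :=
  ∑ k ∈ Finset.range m, ∑ l ∈ Finset.range n, fibSeq (i + k + l)

/-- `(m,n)` is balanced: `{T(i,m,n) : i ≥ 0}` has at most two elements. -/
def FibBalanced (m n : ℕ) : Prop :=
  ∃ x y : ℤ, ∀ i : ℕ, fibT i m n = x ∨ fibT i m n = y

noncomputable def lam : ℝ := (Real.sqrt 5 - 1) / 2
noncomputable def psi : ℝ := (1 - Real.sqrt 5) / 2

lemma s5_sq : Real.sqrt 5 ^ 2 = 5 := Real.sq_sqrt (by norm_num)
lemma s5_lt : Real.sqrt 5 < 3 := by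
  nlinarith [s5_sq, Real.sqrt_nonneg 5]
lemma s5_gt : 2 < Real.sqrt 5 := by
  nlinarith [s5_sq, Real.sqrt_nonneg 5]

lemma lam_pos : 0 < lam := by unfold lam; linarith [s5_gt]
lemma lam_lt_one : lam < 1 := by unfold lam; linarith [s5_lt]
lemma psi_eq : psi = -lam := by unfold psi lam; ring
lemma lam_sq : lam ^ 2 = 1 - lam := by unfold lam; nlinarith [s5_sq]
lemma gam_eq : gam = 1 - lam := by unfold gam lam; ring
lemma psi_sq : psi ^ 2 = psi + 1 := by
  rw [psi_eq]; nlinarith [lam_sq]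
lemma psi_rec (k : ℕ) : psi ^ (k + 2) = psi ^ (k + 1) + psi ^ k := by
  have h : psi ^ (k+2) = psi ^ k * psi ^ 2 := by ring
  rw [h, psi_sq]; ring
lemma abs_psi_pow (k : ℕ) : |psi ^ k| = lam ^ k := by
  rw [abs_pow, psi_eq, abs_neg, abs_of_pos lam_pos]

def Pk (k : ℕ) : ℤ := 2 * Nat.fib k - Nat.fib (k + 1)

lemma fib_gam : ∀ k : ℕ, (Nat.fib k : ℝ) * gam = (Pk k : ℝ) + psi ^ k := by
  intro k
  induction k using Nat.twoStepInduction with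
  | zero => simp [Pk, gam]
  | one =>
    simp only [Nat.fib_one, Pk, Nat.fib_two, pow_one]
    push_cast
    unfold gam psi; ring
  | more k ih1 ih2 =>
    have hf : (Nat.fib (k+2) : ℝ) = Nat.fib k + Nat.fib (k+1) := by
      rw [Nat.fib_add_two]; push_cast; ring
    have hp : (Pk (k+2) : ℝ) = Pk k + Pk (k+1) := by
      unfold Pk
      have h3 : Nat.fib (k+3) = Nat.fib (k+1) + Nat.fib (k+2) := Nat.fib_add_two
      have h2 : Nat.fib (k+2) = Nat.fib k + Nat.fib (k+1) := Nat.fib_add_two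
      push_cast [h3, h2]; ring
    rw [hf, hp, psi_rec]
    linarith [ih1, ih2]

lemma cassini : ∀ k : ℕ, (Nat.fib (k+1) : ℤ) ^ 2 - Nat.fib k * Nat.fib (k+2) = (-1) ^ k := by
  intro k
  induction k with
  | zero => simp
  | succ k ih =>
    have h : (Nat.fib (k+3) : ℤ) = Nat.fib (k+1) + Nat.fib (k+2) := by
      rw [show k+3 = (k+1)+2 from rfl, Nat.fib_add_two]; push_cast; ring
    have h2 : (Nat.fib (k+2) : ℤ) = Nat.fib k + Nat.fib (k+1) := by
      rw [Nat.fib_add_two]; push_cast; ring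
    have e1 : k+1+1 = k+2 := rfl
    have e2 : k+1+2 = k+3 := rfl
    rw [e1, e2, h, h2, pow_succ]
    linear_combination (-1 : ℤ) * ih - (Nat.fib k : ℤ) * h2

lemma det_eq (I : ℕ) : (Nat.fib I : ℤ) * Pk (I+1) - Nat.fib (I+1) * Pk I = (-1) ^ I := by
  unfold Pk
  have h2 : (Nat.fib (I+2) : ℤ) = Nat.fib I + Nat.fib (I+1) := by
    rw [Nat.fib_add_two]; push_cast; ring
  rw [← cassini I]
  push_cast [h2]
  ring

lemma best_approx (I : ℕ) (j p : ℤ) (h1 : 1 ≤ j) (h2 : j < Nat.fib (I+1)) :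
    lam ^ I ≤ |(j : ℝ) * gam - p| := by
  by_contra hcon
  push_neg at hcon
  set σ : ℤ := (-1) ^ I with hσdef
  have hσ2 : σ * σ = 1 := by
    rw [hσdef, ← pow_add]
    simp [pow_mul]
  set a : ℤ := σ * (Pk (I+1) * j - Nat.fib (I+1) * p) with ha
  set b : ℤ := σ * (Nat.fib I * p - Pk I * j) with hb
  have hdet := det_eq I
  have hj : a * Nat.fib I + b * Nat.fib (I+1) = j := by
    have : a * Nat.fib I + b * Nat.fib (I+1)
        = σ * j * ((Nat.fib I : ℤ) * Pk (I+1) - Nat.fib (I+1) * Pk I) := by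
      rw [ha, hb]; ring
    rw [this, hdet, ← hσdef]
    rw [mul_assoc, mul_comm j σ, ← mul_assoc, hσ2, one_mul]
  have hp : a * Pk I + b * Pk (I+1) = p := by
    have : a * Pk I + b * Pk (I+1)
        = σ * p * ((Nat.fib I : ℤ) * Pk (I+1) - Nat.fib (I+1) * Pk I) := by
      rw [ha, hb]; ring
    rw [this, hdet, ← hσdef]
    rw [mul_assoc, mul_comm p σ, ← mul_assoc, hσ2, one_mul]
  have hw : (j : ℝ) * gam - p = (a : ℝ) * psi ^ I + (b : ℝ) * psi ^ (I+1) := by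
    have hjr : ((a : ℝ) * Nat.fib I + b * Nat.fib (I+1)) = (j : ℝ) := by
      exact_mod_cast congrArg (fun z : ℤ => (z : ℝ)) hj
    have hpr : ((a : ℝ) * Pk I + b * Pk (I+1)) = (p : ℝ) := by
      exact_mod_cast congrArg (fun z : ℤ => (z : ℝ)) hp
    calc (j : ℝ) * gam - p
        = ((a : ℝ) * Nat.fib I + b * Nat.fib (I+1)) * gam
          - ((a : ℝ) * Pk I + b * Pk (I+1)) := by rw [hjr, hpr]
      _ = (a : ℝ) * ((Nat.fib I : ℝ) * gam - Pk I)
          + (b : ℝ) * ((Nat.fib (I+1) : ℝ) * gam - Pk (I+1)) := by ring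
      _ = (a : ℝ) * psi ^ I + (b : ℝ) * psi ^ (I+1) := by
          rw [fib_gam I, fib_gam (I+1)]; ring
  have hfac : (a : ℝ) * psi ^ I + (b : ℝ) * psi ^ (I+1) = psi ^ I * ((a : ℝ) + b * psi) := by
    ring
  have habs : |(j : ℝ) * gam - p| = lam ^ I * |(a : ℝ) + b * psi| := by
    rw [hw, hfac, abs_mul, abs_psi_pow]
  have hlamI : (0 : ℝ) < lam ^ I := pow_pos lam_pos I
  have hsmall : |(a : ℝ) + b * psi| < 1 := by
    rw [habs] at hcon
    nlinarith [abs_nonneg ((a:ℝ) + b*psi)]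
  -- rewrite: a + b psi = a - b lam
  rw [psi_eq] at hsmall
  have hsm : |(a : ℝ) - b * lam| < 1 := by
    have : (a : ℝ) + b * -lam = a - b * lam := by ring
    rwa [this] at hsmall
  have hfibpos : (1 : ℤ) ≤ Nat.fib (I+1) := by
    exact_mod_cast Nat.fib_pos.mpr (Nat.succ_pos I)
  have hfibnn : (0 : ℤ) ≤ Nat.fib I := Int.ofNat_nonneg _
  rcases lt_trichotomy b 0 with hbneg | hb0 | hbpos
  · -- b ≤ -1 : a ≤ 0, j ≤ -fib(I+1) < 1
    have hb1 : b ≤ -1 := by omega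
    have hble : (b : ℝ) ≤ -1 := by exact_mod_cast hb1
    have haR : (a : ℝ) < b * lam + 1 := by
      cases abs_lt.mp hsm; linarith
    have : (a : ℝ) < 1 := by nlinarith [lam_pos, lam_lt_one]
    have ha0 : a ≤ 0 := by exact_mod_cast Int.lt_add_one_iff.mp (by exact_mod_cast this)
    have : j ≤ -Nat.fib (I+1) := by
      calc j = a * Nat.fib I + b * Nat.fib (I+1) := hj.symm
        _ ≤ 0 * Nat.fib I + (-1) * Nat.fib (I+1) := by
            apply add_le_add
            · exact mul_le_mul_of_nonneg_right ha0 hfibnn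
            · exact mul_le_mul_of_nonneg_right hb1 (by linarith)
        _ = -Nat.fib (I+1) := by ring
    omega
  · -- b = 0 : |a| < 1 so a = 0, j = 0
    have : |(a : ℝ)| < 1 := by
      rw [hb0] at hsm; simpa using hsm
    have : |a| < 1 := by exact_mod_cast this
    rw [abs_lt] at this
    have ha0 : a = 0 := by omega
    have hj0 : j = 0 := by rw [ha0, hb0] at hj; simpa using hj.symm
    omega
  · -- b ≥ 1 : a ≥ 0, j ≥ fib(I+1)
    have hb1 : (1 : ℤ) ≤ b := hbpos
    have hble : (1 : ℝ) ≤ (b : ℝ) := by exact_mod_cast hb1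
    have haR : (b : ℝ) * lam - 1 < a := by
      cases abs_lt.mp hsm; linarith
    have : (-1 : ℝ) < a := by nlinarith [lam_pos, lam_lt_one]
    have hz : (-1 : ℤ) < a := by exact_mod_cast this
    have ha0 : 0 ≤ a := by omega
    have : (Nat.fib (I+1) : ℤ) ≤ j := by
      calc (Nat.fib (I+1) : ℤ) = 0 * Nat.fib I + 1 * Nat.fib (I+1) := by ring
        _ ≤ a * Nat.fib I + b * Nat.fib (I+1) := by
            apply add_le_add
            · exact mul_le_mul_of_nonneg_right ha0 hfibnn
            · exact mul_le_mul_of_nonneg_right hb1 (by linarith)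
        _ = j := hj
    omega

lemma fib_two' : Nat.fib 2 = 1 := by decide
lemma fib_one' : Nat.fib 1 = 1 := by decide

lemma lam_phi : lam * (1 + lam) = 1 := by nlinarith [lam_sq]

/-- Ostrowski-style nested interval induction. -/
lemma ostrowski (k : ℕ) (u : ℝ) :
    ∃ (j : ℕ) (p : ℤ) (t : ℝ), 1 ≤ j ∧ 0 ≤ t ∧ t ≤ 1 ∧
      ((j ≤ Nat.fib (k+2) ∧
        u + j * gam - p = psi ^ (k+3) + t * (psi ^ (k+2) - psi ^ (k+3))) ∨
       (j ≤ Nat.fib (k+1) ∧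
        u + j * gam - p = psi ^ (k+3) - t * psi ^ (k+2))) := by
  induction k with
  | zero =>
    refine ⟨1, ⌊u + gam + lam⌋, ?_⟩
    set p := ⌊u + gam + lam⌋ with hp
    have hw1 : -lam ≤ u + 1 * gam - p := by
      have := Int.floor_le (u + gam + lam)
      rw [← hp] at this; push_cast; linarith
    have hw2 : u + 1 * gam - p < 1 - lam := by
      have := Int.lt_floor_add_one (u + gam + lam)
      rw [← hp] at this; push_cast; linarith
    rcases le_or_gt (-lam ^ 3) (u + 1 * gam - p) with hcase | hcase
    · refine ⟨(u + 1 * gam - p + lam ^ 3) / lam, le_refl 1, ?_, ?_,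
        Or.inl ⟨by rw [fib_two'], ?_⟩⟩
      · exact div_nonneg (by linarith) (le_of_lt lam_pos)
      · rw [div_le_one lam_pos]; nlinarith [lam_sq]
      · have hcan : (u + 1 * gam - p + lam ^ 3) / lam * lam = u + 1 * gam - p + lam ^ 3 :=
          div_mul_cancel₀ _ (ne_of_gt lam_pos)
        rw [show (0:ℕ)+3 = 3 from rfl, show (0:ℕ)+2 = 2 from rfl, psi_eq]
        push_cast
        linear_combination (-(lam + lam^2)) * hcan + (-(u + 1 * gam - (p:ℝ) + lam^3)) * lam_sq
    · refine ⟨(-lam ^ 3 - (u + 1 * gam - p)) / lam ^ 2, le_refl 1, ?_, ?_,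
        Or.inr ⟨by rw [fib_one'], ?_⟩⟩
      · exact div_nonneg (by linarith) (le_of_lt (pow_pos lam_pos 2))
      · rw [div_le_one (pow_pos lam_pos 2)]; nlinarith [lam_sq]
      · have hcan : (-lam ^ 3 - (u + 1 * gam - p)) / lam ^ 2 * lam ^ 2
            = -lam ^ 3 - (u + 1 * gam - p) := div_mul_cancel₀ _ (ne_of_gt (pow_pos lam_pos 2))
        rw [show (0:ℕ)+3 = 3 from rfl, show (0:ℕ)+2 = 2 from rfl, psi_eq]
        push_cast
        linear_combination hcan
  | succ k ih =>
    obtain ⟨j, p, t, hj1, ht0, ht1, hcase⟩ := ih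
    rcases hcase with ⟨hjle, heq⟩ | ⟨hjle, heq⟩
    · -- region A at level k
      rcases le_or_gt t lam with hts | hts
      · -- stay : new region A with t' = 1 - t * (1+lam)
        refine ⟨j, p, 1 - t * (1 + lam), hj1, ?_, ?_, Or.inl ⟨?_, ?_⟩⟩
        · nlinarith [lam_pos, lam_phi]
        · nlinarith [lam_pos]
        · exact le_trans hjle (Nat.fib_le_fib_succ)
        · rw [show k+1+3 = k+4 from rfl, show k+1+2 = k+3 from rfl, heq, psi_eq]
          linear_combination (-(t * lam^2 * (1+lam) * (-lam)^k)) * lam_sq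
      · -- new region B with t' = (t*(1+lam) - 1)*(1+lam)
        refine ⟨j, p, (t * (1 + lam) - 1) * (1 + lam), hj1, ?_, ?_, Or.inr ⟨hjle, ?_⟩⟩
        · nlinarith [lam_pos, lam_phi]
        · nlinarith [lam_pos, lam_phi, lam_lt_one]
        · rw [show k+1+3 = k+4 from rfl, show k+1+2 = k+3 from rfl, heq, psi_eq]
          linear_combination (-(t * lam^2 * (1+lam) * (-lam)^k)) * lam_sq
    · -- region B at level k : add fib (k+2)
      refine ⟨j + Nat.fib (k+2), p + Pk (k+2), t, le_trans hj1 (Nat.le_add_right _ _),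
        ht0, ht1, Or.inl ⟨?_, ?_⟩⟩
      · have h3 : Nat.fib (k+1+2) = Nat.fib (k+1) + Nat.fib (k+2) := Nat.fib_add_two
        omega
      · have hfg := fib_gam (k+2)
        have expand : u + ((j + Nat.fib (k+2) : ℕ) : ℝ) * gam - ((p + Pk (k+2) : ℤ) : ℝ)
            = (u + j * gam - p) + ((Nat.fib (k+2) : ℝ) * gam - (Pk (k+2) : ℝ)) := by
          push_cast; ring
        rw [show k+1+3 = k+4 from rfl, show k+1+2 = k+3 from rfl, expand, heq, hfg]
        rw [psi_eq]
        linear_combination (-((1-t) * lam^2 * (-lam)^k)) * lam_sq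

lemma density (I : ℕ) (hI : 1 ≤ I) (n : ℕ) :
    ∃ j : ℕ, 1 ≤ j ∧ j ≤ Nat.fib (I+1) ∧
      ∃ p : ℤ, |((n + j : ℕ) : ℝ) * gam - p| ≤ lam ^ I := by
  obtain ⟨k, rfl⟩ : ∃ k, I = k + 1 := ⟨I - 1, by omega⟩
  obtain ⟨j, p, t, hj1, ht0, ht1, hcase⟩ := ostrowski k ((n : ℝ) * gam)
  have hlpos := lam_pos
  have hmono : lam ^ (k+3) ≤ lam ^ (k+2) := by
    have : lam ^ (k+3) = lam ^ (k+2) * lam := by ring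
    nlinarith [pow_pos hlpos (k+2), lam_lt_one]
  have hmono2 : lam ^ (k+2) ≤ lam ^ (k+1) := by
    have : lam ^ (k+2) = lam ^ (k+1) * lam := by ring
    nlinarith [pow_pos hlpos (k+1), lam_lt_one]
  rcases hcase with ⟨hjle, heq⟩ | ⟨hjle, heq⟩
  · refine ⟨j, hj1, hjle, p, ?_⟩
    have hw : ((n + j : ℕ) : ℝ) * gam - p
        = (1 - t) * psi ^ (k+3) + t * psi ^ (k+2) := by
      push_cast
      linear_combination heq
    rw [hw]
    calc |(1 - t) * psi ^ (k+3) + t * psi ^ (k+2)|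
        ≤ |(1 - t) * psi ^ (k+3)| + |t * psi ^ (k+2)| := abs_add_le _ _
      _ = (1 - t) * lam ^ (k+3) + t * lam ^ (k+2) := by
          rw [abs_mul, abs_mul, abs_psi_pow, abs_psi_pow,
            abs_of_nonneg (by linarith : (0:ℝ) ≤ 1 - t), abs_of_nonneg ht0]
      _ ≤ (1 - t) * lam ^ (k+2) + t * lam ^ (k+2) := by nlinarith
      _ = lam ^ (k+2) := by ring
      _ ≤ lam ^ (k+1) := hmono2
  · refine ⟨j, hj1, le_trans hjle (Nat.fib_le_fib_succ), p, ?_⟩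
    have hw : ((n + j : ℕ) : ℝ) * gam - p = psi ^ (k+3) - t * psi ^ (k+2) := by
      push_cast
      linear_combination heq
    rw [hw]
    calc |psi ^ (k+3) - t * psi ^ (k+2)|
        ≤ |psi ^ (k+3)| + |t * psi ^ (k+2)| := by
          rw [sub_eq_add_neg]
          refine (abs_add_le _ _).trans ?_
          rw [abs_neg]
      _ = lam ^ (k+3) + t * lam ^ (k+2) := by
          rw [abs_mul, abs_psi_pow, abs_psi_pow, abs_of_nonneg ht0]
      _ ≤ lam ^ (k+3) + lam ^ (k+2) := by nlinarith [pow_pos hlpos (k+2)]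
      _ = lam ^ (k+1) * (lam ^ 2 + lam) := by ring
      _ = lam ^ (k+1) := by rw [lam_sq]; ring


lemma fibT_eq (i m n : ℕ) :
    fibT i m n = ∑ k ∈ Finset.range m,
      (⌊((i + k + n : ℕ) : ℝ) * gam⌋ - ⌊((i + k : ℕ) : ℝ) * gam⌋) := by
  unfold fibT
  apply Finset.sum_congr rfl
  intro k _
  have : ∀ l ∈ Finset.range n, fibSeq (i + k + l)
      = (fun l : ℕ => ⌊((i + k + l : ℕ) : ℝ) * gam⌋) (l + 1)
        - (fun l : ℕ => ⌊((i + k + l : ℕ) : ℝ) * gam⌋) l := by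
    intro l _
    simp only [fibSeq]
    have h1 : ((i + k + l : ℕ) : ℝ) + 1 = ((i + k + (l + 1) : ℕ) : ℝ) := by push_cast; ring
    rw [h1]
  rw [Finset.sum_congr rfl this, Finset.sum_range_sub
    (fun l : ℕ => ⌊((i + k + l : ℕ) : ℝ) * gam⌋)]
  simp

/-- window-sum helper : sums of windows over a sequence with at most one
"exceptional" position per window take at most two values -/
lemma window_sum (c : ℤ) (e : ℕ → ℤ) (M : ℕ)
    (he : ∀ t, e t = 0 ∨ e t = c)
    (hsep : ∀ t t', t < t' → t' < t + M → e t ≠ 0 → e t' ≠ 0 → False)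
    (m : ℕ) (hm : m ≤ M) (i : ℕ) :
    (∑ k ∈ Finset.range m, e (i + k)) = 0 ∨ (∑ k ∈ Finset.range m, e (i + k)) = c := by
  classical
  set Fs := (Finset.range m).filter (fun k => e (i + k) ≠ 0) with hFs
  have hsum : (∑ k ∈ Finset.range m, e (i + k)) = ∑ k ∈ Fs, e (i + k) := by
    rw [hFs]
    exact (Finset.sum_filter_ne_zero _).symm
  have hcard : Fs.card ≤ 1 := by
    rw [Finset.card_le_one]
    intro a ha b hb
    simp only [hFs, Finset.mem_filter, Finset.mem_range] at ha hb
    by_contra hne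
    rcases Nat.lt_or_ge a b with hab | hab
    · exact hsep (i + a) (i + b) (by omega) (by omega) ha.2 hb.2
    · have hba : b < a := by omega
      exact hsep (i + b) (i + a) (by omega) (by omega) hb.2 ha.2
  rcases Finset.card_le_one_iff_subset_singleton.mp hcard with ⟨x, hx⟩
  rcases Finset.subset_singleton_iff.mp hx with h0 | h1
  · left; rw [hsum, h0, Finset.sum_empty]
  · rw [hsum, h1, Finset.sum_singleton]
    have hxin : x ∈ Fs := by rw [h1]; exact Finset.mem_singleton_self x
    simp only [hFs, Finset.mem_filter] at hxin
    rcases he (i + x) with h | h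
    · exact absurd h hxin.2
    · right; exact h

lemma balanced_of_close (I m n' : ℕ) (p : ℤ) (hI : 1 ≤ I)
    (hm : m ≤ Nat.fib (I+1)) (hb : |(n' : ℝ) * gam - p| ≤ lam ^ I) :
    FibBalanced m n' := by
  set ε := (n' : ℝ) * gam - p with hε
  have hlam_le : lam ^ I ≤ lam := by
    calc lam ^ I ≤ lam ^ 1 := pow_le_pow_of_le_one (le_of_lt lam_pos) (le_of_lt lam_lt_one) hI
      _ = lam := pow_one lam
  have hε1 : |ε| < 1 := lt_of_le_of_lt (le_trans hb hlam_le) lam_lt_one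
  have hεlo : -1 < ε := by rw [abs_lt] at hε1; exact hε1.1
  have hεhi : ε < 1 := by rw [abs_lt] at hε1; exact hε1.2
  set e : ℕ → ℤ := fun t => ⌊(t : ℝ) * gam + ε⌋ - ⌊(t : ℝ) * gam⌋ with hedef
  have hT : ∀ i, fibT i m n' = m * p + ∑ k ∈ Finset.range m, e (i + k) := by
    intro i
    rw [fibT_eq]
    have : ∀ k ∈ Finset.range m,
        (⌊((i + k + n' : ℕ) : ℝ) * gam⌋ - ⌊((i + k : ℕ) : ℝ) * gam⌋) = p + e (i + k) := by
      intro k _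
      have hsplit : ((i + k + n' : ℕ) : ℝ) * gam = ((i + k : ℕ) : ℝ) * gam + ε + p := by
        rw [hε]; push_cast; ring
      rw [hsplit, Int.floor_add_intCast]
      simp only [hedef]
      ring
    rw [Finset.sum_congr rfl this, Finset.sum_add_distrib, Finset.sum_const,
      Finset.card_range]
    ring
  rcases lt_trichotomy ε 0 with hneg | hzero | hpos
  · -- ε < 0 : e t ∈ {0, -1}
    have he : ∀ t, e t = 0 ∨ e t = -1 := by
      intro t
      have h1 : ⌊(t : ℝ) * gam + ε⌋ ≤ ⌊(t : ℝ) * gam⌋ :=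
        Int.floor_le_floor (by linarith)
      have h2 : ⌊(t : ℝ) * gam⌋ - 1 ≤ ⌊(t : ℝ) * gam + ε⌋ := by
        have step : ⌊(t : ℝ) * gam - (1 : ℤ)⌋ ≤ ⌊(t : ℝ) * gam + ε⌋ :=
          Int.floor_le_floor (by push_cast; linarith)
        rwa [Int.floor_sub_intCast] at step
      simp only [hedef]; omega
    have hfr : ∀ s : ℕ, e s ≠ 0 → Int.fract ((s : ℝ) * gam) < -ε := by
      intro s hs
      have hfl : ⌊(s : ℝ) * gam + ε⌋ = ⌊(s : ℝ) * gam⌋ - 1 := by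
        rcases he s with h | h
        · exact absurd h hs
        · simp only [hedef] at h; omega
      have h4 := Int.lt_floor_add_one ((s : ℝ) * gam + ε)
      rw [hfl] at h4
      push_cast at h4
      have : Int.fract ((s : ℝ) * gam) = (s : ℝ) * gam - ⌊(s : ℝ) * gam⌋ := Int.self_sub_floor _ |>.symm
      linarith
    have hsep : ∀ t t', t < t' → t' < t + Nat.fib (I+1) → e t ≠ 0 → e t' ≠ 0 → False := by
      intro t t' htt' hlt hnt hnt'
      have hft := hfr t hnt
      have hft' := hfr t' hnt'
      have hεlam : -ε ≤ lam ^ I := by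
        rw [abs_of_neg hneg] at hb; linarith
      set j : ℤ := (t' : ℤ) - t with hj
      set q : ℤ := ⌊(t' : ℝ) * gam⌋ - ⌊(t : ℝ) * gam⌋ with hq
      have hdiff : (j : ℝ) * gam - q
          = Int.fract ((t' : ℝ) * gam) - Int.fract ((t : ℝ) * gam) := by
        have e1 : Int.fract ((t' : ℝ) * gam) = (t' : ℝ) * gam - ⌊(t' : ℝ) * gam⌋ :=
          (Int.self_sub_floor _).symm
        have e2 : Int.fract ((t : ℝ) * gam) = (t : ℝ) * gam - ⌊(t : ℝ) * gam⌋ :=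
          (Int.self_sub_floor _).symm
        rw [e1, e2, hj, hq]
        push_cast
        ring
      have habs : |(j : ℝ) * gam - q| < lam ^ I := by
        rw [hdiff, abs_lt]
        constructor
        · linarith [Int.fract_nonneg ((t' : ℝ) * gam)]
        · linarith [Int.fract_nonneg ((t : ℝ) * gam)]
      exact absurd (best_approx I j q (by omega) (by omega))
        (not_le.mpr habs)
    refine ⟨(m : ℤ) * p, (m : ℤ) * p + -1, fun i => ?_⟩
    rcases window_sum (-1) e (Nat.fib (I+1)) he hsep m hm i with h | h
    · left; rw [hT i, h]; push_cast; ring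
    · right; rw [hT i, h]
  · -- ε = 0
    refine ⟨(m : ℤ) * p, (m : ℤ) * p, fun i => Or.inl ?_⟩
    rw [hT i]
    have : ∀ k ∈ Finset.range m, e (i + k) = 0 := by
      intro k _
      simp only [hedef, hzero, add_zero, sub_self]
    rw [Finset.sum_congr rfl this, Finset.sum_const_zero]
    push_cast; ring
  · -- ε > 0 : e t ∈ {0, 1}
    have he : ∀ t, e t = 0 ∨ e t = 1 := by
      intro t
      have h1 : ⌊(t : ℝ) * gam⌋ ≤ ⌊(t : ℝ) * gam + ε⌋ :=
        Int.floor_le_floor (by linarith)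
      have h2 : ⌊(t : ℝ) * gam + ε⌋ ≤ ⌊(t : ℝ) * gam⌋ + 1 := by
        have step : ⌊(t : ℝ) * gam + ε⌋ ≤ ⌊(t : ℝ) * gam + (1 : ℤ)⌋ :=
          Int.floor_le_floor (by push_cast; linarith)
        rwa [Int.floor_add_intCast] at step
      simp only [hedef]; omega
    have hfr : ∀ s : ℕ, e s ≠ 0 → 1 - ε ≤ Int.fract ((s : ℝ) * gam) := by
      intro s hs
      have hfl : ⌊(s : ℝ) * gam + ε⌋ = ⌊(s : ℝ) * gam⌋ + 1 := by
        rcases he s with h | h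
        · exact absurd h hs
        · simp only [hedef] at h; omega
      have h4 : ((⌊(s : ℝ) * gam⌋ + 1 : ℤ) : ℝ) ≤ (s : ℝ) * gam + ε := by
        rw [← hfl]; exact Int.floor_le _
      push_cast at h4
      have : Int.fract ((s : ℝ) * gam) = (s : ℝ) * gam - ⌊(s : ℝ) * gam⌋ :=
        (Int.self_sub_floor _).symm
      linarith
    have hsep : ∀ t t', t < t' → t' < t + Nat.fib (I+1) → e t ≠ 0 → e t' ≠ 0 → False := by
      intro t t' htt' hlt hnt hnt'
      have hft := hfr t hnt
      have hft' := hfr t' hnt'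
      have hεlam : ε ≤ lam ^ I := by
        rw [abs_of_pos hpos] at hb; linarith
      set j : ℤ := (t' : ℤ) - t with hj
      set q : ℤ := ⌊(t' : ℝ) * gam⌋ - ⌊(t : ℝ) * gam⌋ with hq
      have hdiff : (j : ℝ) * gam - q
          = Int.fract ((t' : ℝ) * gam) - Int.fract ((t : ℝ) * gam) := by
        have e1 : Int.fract ((t' : ℝ) * gam) = (t' : ℝ) * gam - ⌊(t' : ℝ) * gam⌋ :=
          (Int.self_sub_floor _).symm
        have e2 : Int.fract ((t : ℝ) * gam) = (t : ℝ) * gam - ⌊(t : ℝ) * gam⌋ :=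
          (Int.self_sub_floor _).symm
        rw [e1, e2, hj, hq]
        push_cast
        ring
      have habs : |(j : ℝ) * gam - q| < lam ^ I := by
        rw [hdiff, abs_lt]
        constructor
        · linarith [Int.fract_lt_one ((t : ℝ) * gam)]
        · linarith [Int.fract_lt_one ((t' : ℝ) * gam)]
      exact absurd (best_approx I j q (by omega) (by omega))
        (not_le.mpr habs)
    refine ⟨(m : ℤ) * p, (m : ℤ) * p + 1, fun i => ?_⟩
    rcases window_sum 1 e (Nat.fib (I+1)) he hsep m hm i with h | h
    · left; rw [hT i, h]; push_cast; ring
    · right; rw [hT i, h]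

theorem balanced_density (I m : ℕ) (hI : 2 ≤ I)
    (hm₁ : Nat.fib I < m) (hm₂ : m ≤ Nat.fib (I + 1)) :
    ∀ n : ℕ, 1 ≤ n → ∃ j : ℕ, 1 ≤ j ∧ j ≤ Nat.fib (I + 1) ∧ FibBalanced m (n + j) := by

  intro n _
  obtain ⟨j, hj1, hjF, p, hp⟩ := density I (by omega) n
  exact ⟨j, hj1, hjF, balanced_of_close I m (n + j) p (by omega) hm₂ hp⟩
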